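/- Let B be a real symmetric positive definite 3×3 matrix and let M be any real 3×3 matrix. Then ℂ(B):(B·M + Mᵀ·B) = (tr M)·A(B) + M·A(B) + A(B)·Mᵀ − 2·𝔸(B):M. -/

import Mathlib

open Matrix MeasureTheory

noncomputable section

/-- 3×3 real matrices. -/
abbrev Mat3 := Matrix (Fin 3) (Fin 3) ℝ

/-- Rank-4 tensors on ℝ³. -/
abbrev Tens4 := Fin 3 → Fin 3 → Fin 3 → Fin 3 → ℝ

/-- Tensor (outer) product of two matrices: `(K ⊗ L)_{ijkl} = K_{ij} L_{kl}`. -/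
def otimes (K L : Mat3) : Tens4 := fun i j k l => K i j * L k l

/-- Symmetrization of a rank-4 tensor: the average over all 24 permutations of the indices. -/
def symmetrize (T : Tens4) : Tens4 := fun i j k l =>
  (∑ σ : Equiv.Perm (Fin 4),
      T (![i, j, k, l] (σ 0)) (![i, j, k, l] (σ 1)) (![i, j, k, l] (σ 2)) (![i, j, k, l] (σ 3)))
    / 24

/-- Contraction of a rank-4 tensor with a matrix: `(𝔹:M)_{ij} = Σ_{k,l} 𝔹_{ijkl} M_{kl}`. -/
def contr (T : Tens4) (M : Mat3) : Mat3 :=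
  Matrix.of fun i j => ∑ k, ∑ l, T i j k l * M k l

/-- Full contraction `N:𝔹:M = Σ_{i,j,k,l} N_{ij} 𝔹_{ijkl} M_{kl}`. -/
def dcontr (N : Mat3) (T : Tens4) (M : Mat3) : ℝ :=
  ∑ i, ∑ j, ∑ k, ∑ l, N i j * T i j k l * M k l

/-- The matrix `(B + s·I)⁻¹` (matrix inverse). -/
def res (B : Mat3) (s : ℝ) : Mat3 := (B + s • (1 : Mat3))⁻¹

/-- `A(B) = (1/2)·∫₀^∞ (B + s·I)⁻¹ / √(det(B + s·I)) ds`, entrywise. -/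
def Amat (B : Mat3) : Mat3 :=
  Matrix.of fun i j =>
    (1 / 2) * ∫ s in Set.Ioi (0 : ℝ),
      res B s i j / Real.sqrt (B + s • (1 : Mat3)).det

/-- `𝔸(B) = (3/4)·∫₀^∞ s·S((B+sI)⁻¹ ⊗ (B+sI)⁻¹) / √(det(B+sI)) ds`, entrywise. -/
def Atens (B : Mat3) : Tens4 := fun i j k l =>
  (3 / 4) * ∫ s in Set.Ioi (0 : ℝ),
    s * symmetrize (otimes (res B s) (res B s)) i j k l
      / Real.sqrt (B + s • (1 : Mat3)).det

/-- `ℂ(B) = (3/4)·∫₀^∞ S((B+sI)⁻¹ ⊗ (B+sI)⁻¹) / √(det(B+sI)) ds`, entrywise. -/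
def Ctens (B : Mat3) : Tens4 := fun i j k l =>
  (3 / 4) * ∫ s in Set.Ioi (0 : ℝ),
    symmetrize (otimes (res B s) (res B s)) i j k l
      / Real.sqrt (B + s • (1 : Mat3)).det

end

/- ### Auxiliary lemmas -/

private lemma perm_sum_succ {n : ℕ} (g : Equiv.Perm (Fin (n+1)) → ℝ) :
    ∑ σ : Equiv.Perm (Fin (n+1)), g σ
      = ∑ i : Fin (n+1), ∑ τ : Equiv.Perm (Fin n), g (Equiv.Perm.decomposeFin.symm (i, τ)) := by
  rw [← Equiv.sum_comp Equiv.Perm.decomposeFin.symm g, Fintype.sum_prod_type]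

private lemma perm_sum_zero (g : Equiv.Perm (Fin 0) → ℝ) :
    ∑ σ : Equiv.Perm (Fin 0), g σ = g 1 := by
  simp [Finset.sum_eq_single 1]

open Equiv.Perm in
private lemma symmetrize_otimes_self (R : Mat3) (hR : ∀ a b, R a b = R b a) (i j k l : Fin 3) :
    symmetrize (otimes R R) i j k l
      = (R i j * R k l + R i k * R j l + R i l * R j k) / 3 := by
  have h : (∑ σ : Equiv.Perm (Fin 4),
      R (![i,j,k,l] (σ 0)) (![i,j,k,l] (σ 1)) * R (![i,j,k,l] (σ 2)) (![i,j,k,l] (σ 3)))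
      = 8 * (R i j * R k l + R i k * R j l + R i l * R j k) := by
    simp only [perm_sum_succ, perm_sum_zero, Fin.sum_univ_succ, Fin.sum_univ_zero,
      show ((3:Fin 4)) = Fin.succ 2 from rfl, show ((2:Fin 4)) = Fin.succ 1 from rfl,
      show ((2:Fin 3)) = Fin.succ 1 from rfl,
      decomposeFin_symm_apply_zero, decomposeFin_symm_apply_one, decomposeFin_symm_apply_succ]
    simp (config := { decide := true }) only [Equiv.swap_apply_def, Fin.succ]
    norm_num [Equiv.swap_apply_def, Fin.ext_iff]
    norm_num [hR j i, hR k i, hR l i, hR k j, hR l j, hR l k]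
    ring
  simp only [symmetrize, otimes]
  rw [h]; ring

private lemma contr_symmetrize (R N : Mat3) (hR : ∀ a b, R a b = R b a) :
    contr (symmetrize (otimes R R)) N
      = (1/3 : ℝ) • ((∑ k, ∑ l, R k l * N k l) • R + R * N * R + R * Nᵀ * R) := by
  have e1 : ∀ i j : Fin 3, (R * N * R) i j = ∑ k, ∑ l, R i k * R j l * N k l := by
    intro i j
    calc (R * N * R) i j = ∑ l, (∑ k, R i k * N k l) * R l j := by
          simp [Matrix.mul_apply]
      _ = ∑ l, ∑ k, R i k * R j l * N k l := by
          refine Finset.sum_congr rfl fun l _ => ?_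
          rw [Finset.sum_mul]
          refine Finset.sum_congr rfl fun k _ => ?_
          rw [hR l j]; ring
      _ = ∑ k, ∑ l, R i k * R j l * N k l := Finset.sum_comm
  have e2 : ∀ i j : Fin 3, (R * Nᵀ * R) i j = ∑ k, ∑ l, R i l * R j k * N k l := by
    intro i j
    calc (R * Nᵀ * R) i j = ∑ k, (∑ l, R i l * Nᵀ l k) * R k j := by
          simp [Matrix.mul_apply]
      _ = ∑ k, ∑ l, R i l * R j k * N k l := by
          refine Finset.sum_congr rfl fun k _ => ?_
          rw [Finset.sum_mul]
          refine Finset.sum_congr rfl fun l _ => ?_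
          rw [Matrix.transpose_apply, hR k j]; ring
  ext i j
  simp only [contr, Matrix.of_apply, symmetrize_otimes_self R hR, Matrix.smul_apply,
    Matrix.add_apply, smul_eq_mul, e1, e2]
  simp only [mul_add, Finset.mul_sum, Finset.sum_mul, ← Finset.sum_add_distrib]
  refine Finset.sum_congr rfl fun k _ => ?_
  refine Finset.sum_congr rfl fun l _ => ?_
  ring

private lemma integrableOn_of_bound {f : ℝ → ℝ} {C ε : ℝ} (hε : 0 < ε) (hC : 0 ≤ C)
    (hm : ContinuousOn f (Set.Ioi 0))
    (hb : ∀ s ∈ Set.Ioi (0:ℝ), |f s| ≤ C * (ε + s) ^ (-(5/2) : ℝ)) :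
    IntegrableOn f (Set.Ioi 0) := by
  have hmm : AEStronglyMeasurable f (volume.restrict (Set.Ioi 0)) :=
    hm.aestronglyMeasurable measurableSet_Ioi
  have h1 : IntegrableOn f (Set.Ioc 0 ε) := by
    refine Integrable.mono' (g := fun _ => C * ε ^ (-(5/2) : ℝ))
      ((integrableOn_const_iff).mpr (Or.inr measure_Ioc_lt_top))
      (hmm.mono_measure (Measure.restrict_mono Set.Ioc_subset_Ioi_self le_rfl)) ?_
    filter_upwards [ae_restrict_mem measurableSet_Ioc] with s hs
    have hs0 : 0 < s := hs.1
    calc ‖f s‖ = |f s| := rfl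
      _ ≤ C * (ε + s) ^ (-(5/2) : ℝ) := hb s hs0
      _ ≤ C * ε ^ (-(5/2) : ℝ) := by
          refine mul_le_mul_of_nonneg_left ?_ hC
          exact Real.rpow_le_rpow_of_nonpos hε (by linarith) (by norm_num)
  have h2 : IntegrableOn f (Set.Ioi ε) := by
    have hg : IntegrableOn (fun s : ℝ => C * s ^ (-(5/2) : ℝ)) (Set.Ioi ε) :=
      (integrableOn_Ioi_rpow_of_lt (by norm_num) hε).const_mul C
    refine Integrable.mono' hg
      (hmm.mono_measure (Measure.restrict_mono (Set.Ioi_subset_Ioi hε.le) le_rfl)) ?_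
    filter_upwards [ae_restrict_mem measurableSet_Ioi] with s hs
    have hs0 : 0 < s := hε.trans hs
    calc ‖f s‖ = |f s| := rfl
      _ ≤ C * (ε + s) ^ (-(5/2) : ℝ) := hb s hs0
      _ ≤ C * s ^ (-(5/2) : ℝ) := by
          refine mul_le_mul_of_nonneg_left ?_ hC
          exact Real.rpow_le_rpow_of_nonpos hs0 (by linarith) (by norm_num)
  refine ((h1.union h2).mono_set ?_)
  intro x hx
  rcases le_or_gt x ε with h | h
  · exact Or.inl ⟨hx, h⟩
  · exact Or.inr h

theorem Ctens_contract_eq (B : Mat3) (hB : B.PosDef) (M : Mat3) :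
    contr (Ctens B) (B * M + Mᵀ * B)
      = M.trace • Amat B + M * Amat B + Amat B * Mᵀ - (2 : ℝ) • contr (Atens B) M := by
  classical
  have hH := hB.1
  set lam := hH.eigenvalues with hlam
  have hlpos : ∀ i, 0 < lam i := hB.eigenvalues_pos
  set V : Mat3 := (hH.eigenvectorUnitary : Mat3) with hVdef
  have hVV : V * star V = 1 := Matrix.mem_unitaryGroup_iff.mp hH.eigenvectorUnitary.2
  have hVV' : star V * V = 1 := Matrix.mem_unitaryGroup_iff'.mp hH.eigenvectorUnitary.2
  have hsp : B = V * Matrix.diagonal lam * star V := by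
    have h := hH.spectral_theorem
    have : Matrix.diagonal ((RCLike.ofReal : ℝ → ℝ) ∘ lam) = Matrix.diagonal lam := by
      norm_num [RCLike.ofReal]
    rw [this] at h
    exact h
  set ε : ℝ := min (min (lam 0) (lam 1)) (lam 2) with hεdef
  have hε : 0 < ε := lt_min (lt_min (hlpos 0) (hlpos 1)) (hlpos 2)
  have hεle : ∀ i, ε ≤ lam i := by
    intro i; fin_cases i
    · exact le_trans (min_le_left _ _) (min_le_left _ _)
    · exact le_trans (min_le_left _ _) (min_le_right _ _)
    · exact min_le_right _ _
  have hPs : ∀ s : ℝ, B + s • (1:Mat3) = V * Matrix.diagonal (fun i => lam i + s) * star V := by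
    intro s
    have h1 : Matrix.diagonal (fun i => lam i + s)
        = Matrix.diagonal lam + s • (1:Mat3) := by
      rw [Matrix.smul_one_eq_diagonal, ← Matrix.diagonal_add]
    rw [h1, Matrix.mul_add, Matrix.add_mul, ← hsp]
    congr 1
    rw [Matrix.mul_smul, Matrix.smul_mul, Matrix.mul_one, hVV]
  have hdet : ∀ s : ℝ, (B + s • (1:Mat3)).det = ∏ i, (lam i + s) := by
    intro s
    have hu : V.det * (star V).det = 1 := by rw [← Matrix.det_mul, hVV, Matrix.det_one]
    rw [hPs s, Matrix.det_mul, Matrix.det_mul,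
      show V.det * (Matrix.diagonal fun i => lam i + s).det * (star V).det
        = (V.det * (star V).det) * (Matrix.diagonal fun i => lam i + s).det from by ring,
      hu, one_mul, Matrix.det_diagonal]
  have hdetpos : ∀ s : ℝ, 0 ≤ s → 0 < (B + s • (1:Mat3)).det := by
    intro s hs
    rw [hdet s]
    exact Finset.prod_pos fun i _ => by have := hlpos i; linarith
  have hdetge : ∀ s : ℝ, 0 ≤ s → (ε+s)^3 ≤ (B + s • (1:Mat3)).det := by
    intro s hs
    rw [hdet s]
    calc (ε+s)^3 = ∏ _i : Fin 3, (ε+s) := by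
          rw [Finset.prod_const]; norm_num
      _ ≤ ∏ i, (lam i + s) :=
          Finset.prod_le_prod (fun i _ => by positivity)
            (fun i _ => by linarith [hεle i])
  have hres : ∀ s : ℝ, 0 ≤ s →
      res B s = V * Matrix.diagonal (fun i => (lam i + s)⁻¹) * star V := by
    intro s hs
    apply Matrix.inv_eq_right_inv
    rw [hPs s]
    simp only [← Matrix.mul_assoc]
    rw [Matrix.mul_assoc (V * Matrix.diagonal fun i => lam i + s) (star V) V, hVV',
      Matrix.mul_one, Matrix.mul_assoc V (Matrix.diagonal _) (Matrix.diagonal _),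
      Matrix.diagonal_mul_diagonal]
    have : (fun i => (lam i + s) * (lam i + s)⁻¹) = fun _ => (1:ℝ) := by
      funext i
      have := hlpos i
      exact mul_inv_cancel₀ (by linarith)
    rw [this, Matrix.diagonal_one, Matrix.mul_one, hVV]
  have hentry : ∀ s : ℝ, 0 ≤ s → ∀ a b,
      res B s a b = ∑ x, V a x * (lam x + s)⁻¹ * V b x := by
    intro s hs a b
    rw [hres s hs, Matrix.mul_apply]
    refine Finset.sum_congr rfl fun x _ => ?_
    rw [Matrix.mul_diagonal, Matrix.star_apply, star_trivial]
  have hressymm : ∀ s : ℝ, 0 ≤ s → ∀ a b, res B s a b = res B s b a := by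
    intro s hs a b
    rw [hentry s hs, hentry s hs]
    exact Finset.sum_congr rfl fun x _ => by ring
  have hVbound : ∀ a x, |V a x| ≤ 1 := by
    intro a x
    have h1 : (V * star V) a a = 1 := by rw [hVV, Matrix.one_apply_eq]
    have h2 : ∑ y, V a y * V a y = 1 := by
      rw [Matrix.mul_apply] at h1
      simpa [Matrix.star_apply] using h1
    have h3 : V a x * V a x ≤ 1 := by
      rw [← h2]
      exact Finset.single_le_sum (fun y _ => mul_self_nonneg (V a y)) (Finset.mem_univ x)
    exact abs_le_one_iff_mul_self_le_one.mpr h3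
  have hresbound : ∀ s : ℝ, 0 ≤ s → ∀ a b, |res B s a b| ≤ 3 * (ε + s)⁻¹ := by
    intro s hs a b
    rw [hentry s hs]
    calc |∑ x, V a x * (lam x + s)⁻¹ * V b x|
        ≤ ∑ x, |V a x * (lam x + s)⁻¹ * V b x| := Finset.abs_sum_le_sum_abs _ _
      _ ≤ ∑ _x : Fin 3, (ε + s)⁻¹ := by
          refine Finset.sum_le_sum fun x _ => ?_
          rw [abs_mul, abs_mul]
          have hinv : |(lam x + s)⁻¹| ≤ (ε + s)⁻¹ := by
            rw [abs_of_pos (by have := hlpos x; positivity)]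
            exact inv_anti₀ (by positivity) (by linarith [hεle x])
          have h0 : (0:ℝ) ≤ |(lam x + s)⁻¹| := abs_nonneg _
          calc |V a x| * |(lam x + s)⁻¹| * |V b x|
              ≤ |(lam x + s)⁻¹| * |V b x| :=
                mul_le_mul_of_nonneg_right (mul_le_of_le_one_left h0 (hVbound a x)) (abs_nonneg _)
            _ ≤ |(lam x + s)⁻¹| * 1 := mul_le_mul_of_nonneg_left (hVbound b x) h0
            _ ≤ (ε + s)⁻¹ := by rw [mul_one]; exact hinv
      _ = 3 * (ε + s)⁻¹ := by rw [Finset.sum_const]; norm_num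
  -- the weight function
  set d : ℝ → ℝ := fun s => Real.sqrt ((B + s • (1:Mat3)).det) with hddef
  have hdpos : ∀ s : ℝ, 0 ≤ s → 0 < d s := fun s hs => Real.sqrt_pos.mpr (hdetpos s hs)
  have hdinv : ∀ s : ℝ, 0 ≤ s → (d s)⁻¹ ≤ (ε + s) ^ (-(3/2) : ℝ) := by
    intro s hs
    have hu : 0 < ε + s := by positivity
    have h2 : Real.sqrt ((ε+s)^3) = (ε+s) ^ ((3:ℝ)/2) := by
      rw [Real.sqrt_eq_rpow, ← Real.rpow_natCast (ε+s) 3, ← Real.rpow_mul hu.le]; norm_num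
    have h1 : (ε+s) ^ ((3:ℝ)/2) ≤ d s := by
      rw [← h2]; exact Real.sqrt_le_sqrt (hdetge s hs)
    have h3 : (0:ℝ) < (ε+s) ^ ((3:ℝ)/2) := Real.rpow_pos_of_pos hu _
    calc (d s)⁻¹ ≤ ((ε+s) ^ ((3:ℝ)/2))⁻¹ := inv_anti₀ h3 h1
      _ = (ε+s) ^ (-(3/2) : ℝ) := by
          rw [← Real.rpow_neg hu.le]; try norm_num
  have hrpadd : ∀ u : ℝ, 0 < u → u⁻¹ * u ^ (-(3/2) : ℝ) = u ^ (-(5/2) : ℝ) := by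
    intro u hu
    rw [← Real.rpow_neg_one u, ← Real.rpow_add hu]; norm_num
  have hsymbound : ∀ s : ℝ, 0 ≤ s → ∀ i j k l : Fin 3,
      |symmetrize (otimes (res B s) (res B s)) i j k l|
        ≤ 9 * ((ε+s)⁻¹ * (ε+s)⁻¹) := by
    intro s hs i j k l
    have hu : (0:ℝ) < ε + s := by positivity
    have hterm : ∀ σ : Equiv.Perm (Fin 4),
        |otimes (res B s) (res B s) (![i,j,k,l] (σ 0)) (![i,j,k,l] (σ 1))
          (![i,j,k,l] (σ 2)) (![i,j,k,l] (σ 3))| ≤ (3*(ε+s)⁻¹) * (3*(ε+s)⁻¹) := by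
      intro σ
      rw [otimes, abs_mul]
      exact mul_le_mul (hresbound s hs _ _) (hresbound s hs _ _) (abs_nonneg _) (by positivity)
    rw [symmetrize, abs_div]
    calc |∑ σ : Equiv.Perm (Fin 4), otimes (res B s) (res B s) (![i,j,k,l] (σ 0))
            (![i,j,k,l] (σ 1)) (![i,j,k,l] (σ 2)) (![i,j,k,l] (σ 3))| / |(24:ℝ)|
        ≤ (∑ _σ : Equiv.Perm (Fin 4), (3*(ε+s)⁻¹) * (3*(ε+s)⁻¹)) / |(24:ℝ)| := by
          apply div_le_div_of_nonneg_right ?_ (by norm_num)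
          exact le_trans (Finset.abs_sum_le_sum_abs _ _) (Finset.sum_le_sum fun σ _ => hterm σ)
      _ = 9 * ((ε+s)⁻¹ * (ε+s)⁻¹) := by
          rw [Finset.sum_const]
          simp [Fintype.card_perm, Nat.factorial]
          ring
  -- continuity
  have hcP : Continuous fun s : ℝ => B + s • (1:Mat3) :=
    continuous_const.add (continuous_id.smul continuous_const)
  have hcdet : Continuous fun s : ℝ => (B + s • (1:Mat3)).det := hcP.matrix_det
  have hcd : Continuous d := Real.continuous_sqrt.comp hcdet
  have hcres : ∀ a b, ContinuousOn (fun s => res B s a b) (Set.Ioi 0) := by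
    intro a b
    have heq : ∀ s : ℝ, res B s a b = ((B + s•(1:Mat3)).det)⁻¹ * (B + s•(1:Mat3)).adjugate a b := by
      intro s; rw [res, Matrix.inv_def, Ring.inverse_eq_inv', Matrix.smul_apply, smul_eq_mul]
    simp only [heq]
    exact (hcdet.continuousOn.inv₀ fun s hs => (hdetpos s (le_of_lt hs)).ne').mul
      ((hcP.matrix_adjugate.matrix_elem a b).continuousOn)
  have hcsym : ∀ i j k l : Fin 3,
      ContinuousOn (fun s => symmetrize (otimes (res B s) (res B s)) i j k l) (Set.Ioi 0) := by
    intro i j k l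
    simp only [symmetrize, otimes]
    apply ContinuousOn.div_const
    apply continuousOn_finset_sum
    intro σ _
    exact (hcres _ _).mul (hcres _ _)
  have hdne : ∀ s ∈ Set.Ioi (0:ℝ), d s ≠ 0 := fun s hs => (hdpos s (le_of_lt hs)).ne'
  -- integrability of the three families
  have hintA : ∀ a b, IntegrableOn (fun s => res B s a b / d s) (Set.Ioi 0) := by
    intro a b
    refine integrableOn_of_bound hε (by norm_num : (0:ℝ) ≤ 3)
      ((hcres a b).div hcd.continuousOn hdne) ?_
    intro s hs
    have hs0 : (0:ℝ) ≤ s := le_of_lt hs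
    have hu : 0 < ε + s := by positivity
    rw [abs_div, abs_of_pos (hdpos s hs0), div_eq_mul_inv]
    calc |res B s a b| * (d s)⁻¹
        ≤ (3*(ε+s)⁻¹) * ((ε+s) ^ (-(3/2) : ℝ)) :=
          mul_le_mul (hresbound s hs0 a b) (hdinv s hs0)
            (inv_nonneg.mpr (hdpos s hs0).le) (by positivity)
      _ = 3 * (ε+s) ^ (-(5/2) : ℝ) := by rw [mul_assoc, hrpadd _ hu]
  have hintC : ∀ i j k l : Fin 3,
      IntegrableOn (fun s => symmetrize (otimes (res B s) (res B s)) i j k l / d s)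
        (Set.Ioi 0) := by
    intro i j k l
    refine integrableOn_of_bound hε (show (0:ℝ) ≤ 9 * ε⁻¹ by positivity)
      ((hcsym i j k l).div hcd.continuousOn hdne) ?_
    intro s hs
    have hs0 : (0:ℝ) ≤ s := le_of_lt hs
    have hu : 0 < ε + s := by positivity
    rw [abs_div, abs_of_pos (hdpos s hs0), div_eq_mul_inv]
    calc |symmetrize (otimes (res B s) (res B s)) i j k l| * (d s)⁻¹
        ≤ (9 * ((ε+s)⁻¹ * (ε+s)⁻¹)) * ((ε+s) ^ (-(3/2) : ℝ)) :=
          mul_le_mul (hsymbound s hs0 i j k l) (hdinv s hs0)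
            (inv_nonneg.mpr (hdpos s hs0).le) (by positivity)
      _ = 9 * (ε+s)⁻¹ * (ε+s) ^ (-(5/2) : ℝ) := by
          rw [show (9:ℝ) * ((ε+s)⁻¹ * (ε+s)⁻¹) * ((ε+s) ^ (-(3/2) : ℝ))
              = 9 * (ε+s)⁻¹ * ((ε+s)⁻¹ * (ε+s) ^ (-(3/2) : ℝ)) from by ring, hrpadd _ hu]
      _ ≤ 9 * ε⁻¹ * (ε+s) ^ (-(5/2) : ℝ) := by
          have h1 : (ε+s)⁻¹ ≤ ε⁻¹ := inv_anti₀ hε (by linarith)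
          have h2 : (0:ℝ) ≤ (ε+s) ^ (-(5/2) : ℝ) := (Real.rpow_pos_of_pos hu _).le
          nlinarith
  have hintAt : ∀ i j k l : Fin 3,
      IntegrableOn (fun s => s * symmetrize (otimes (res B s) (res B s)) i j k l / d s)
        (Set.Ioi 0) := by
    intro i j k l
    refine integrableOn_of_bound hε (show (0:ℝ) ≤ 9 by norm_num)
      (((continuousOn_id).mul (hcsym i j k l)).div hcd.continuousOn hdne) ?_
    intro s hs
    have hs0 : (0:ℝ) ≤ s := le_of_lt hs
    have hu : 0 < ε + s := by positivity
    rw [abs_div, abs_of_pos (hdpos s hs0), div_eq_mul_inv, abs_mul, abs_of_nonneg hs0]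
    calc s * |symmetrize (otimes (res B s) (res B s)) i j k l| * (d s)⁻¹
        ≤ s * (9 * ((ε+s)⁻¹ * (ε+s)⁻¹)) * ((ε+s) ^ (-(3/2) : ℝ)) := by
          refine mul_le_mul (mul_le_mul_of_nonneg_left (hsymbound s hs0 i j k l) hs0)
            (hdinv s hs0) (inv_nonneg.mpr (hdpos s hs0).le) (by positivity)
      _ = (s * (ε+s)⁻¹) * (9 * ((ε+s)⁻¹ * (ε+s) ^ (-(3/2) : ℝ))) := by ring
      _ ≤ 1 * (9 * ((ε+s)⁻¹ * (ε+s) ^ (-(3/2) : ℝ))) := by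
          have h1 : s * (ε+s)⁻¹ ≤ 1 := by
            rw [← div_eq_mul_inv, div_le_one hu]; linarith
          have h2 : (0:ℝ) ≤ (ε+s)⁻¹ * (ε+s) ^ (-(3/2) : ℝ) := by positivity
          nlinarith
      _ = 9 * (ε+s) ^ (-(5/2) : ℝ) := by rw [one_mul, hrpadd _ hu]
  -- the key pointwise matrix identity
  have hBt : Bᵀ = B := by
    rw [← Matrix.conjTranspose_eq_transpose_of_trivial]; exact hH
  have hNt : (B * M + Mᵀ * B)ᵀ = B * M + Mᵀ * B := by
    rw [Matrix.transpose_add, Matrix.transpose_mul, Matrix.transpose_mul,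
      Matrix.transpose_transpose, hBt, add_comm]
  have hkey : ∀ s : ℝ, 0 < s →
      contr (symmetrize (otimes (res B s) (res B s))) (B * M + Mᵀ * B)
        + (2*s) • contr (symmetrize (otimes (res B s) (res B s))) M
      = (2/3 : ℝ) • (M.trace • res B s + M * res B s + res B s * Mᵀ) := by
    intro s hs
    have hs0 : (0:ℝ) ≤ s := hs.le
    set R := res B s with hRdef
    have hsym : ∀ a b, R a b = R b a := hressymm s hs0
    have hRt : Rᵀ = R := by
      ext a b; rw [Matrix.transpose_apply]; exact hsym b a
    have hdet0 : IsUnit (B + s • (1:Mat3)).det := isUnit_iff_ne_zero.mpr (hdetpos s hs0).ne'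
    have hRP : R * (B + s • (1:Mat3)) = 1 := Matrix.nonsing_inv_mul _ hdet0
    have hPR : (B + s • (1:Mat3)) * R = 1 := Matrix.mul_nonsing_inv _ hdet0
    have hRB : R * B = 1 - s • R := by
      have h := hRP
      rw [Matrix.mul_add, Matrix.mul_smul, Matrix.mul_one] at h
      exact eq_sub_of_add_eq h
    have hBR : B * R = 1 - s • R := by
      have h := hPR
      rw [Matrix.add_mul, Matrix.smul_mul, Matrix.one_mul] at h
      exact eq_sub_of_add_eq h
    have hcX : ∀ X : Mat3, (∑ k, ∑ l, R k l * X k l) = Matrix.trace (R * Xᵀ) := by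
      intro X
      simp [Matrix.trace, Matrix.diag, Matrix.mul_apply, Matrix.transpose_apply]
    have htr : Matrix.trace (R * Mᵀ) = Matrix.trace (R * M) := by
      rw [← Matrix.trace_transpose (R * Mᵀ), Matrix.transpose_mul, Matrix.transpose_transpose,
        hRt, Matrix.trace_mul_comm]
    have ht1 : Matrix.trace (R * (B * M + Mᵀ * B))
        = 2 * M.trace - 2 * s * Matrix.trace (R * M) := by
      have e1 : R * (B * M + Mᵀ * B) = (1 - s•R) * M + R * Mᵀ * B := by
        rw [Matrix.mul_add, ← Matrix.mul_assoc, hRB, ← Matrix.mul_assoc]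
      rw [e1, Matrix.trace_add, Matrix.sub_mul, Matrix.one_mul, Matrix.trace_sub,
        Matrix.smul_mul, Matrix.trace_smul, smul_eq_mul,
        Matrix.trace_mul_comm (R * Mᵀ) B, ← Matrix.mul_assoc, hBR, Matrix.sub_mul,
        Matrix.one_mul, Matrix.trace_sub, Matrix.smul_mul, Matrix.trace_smul, smul_eq_mul,
        Matrix.trace_transpose, htr]
      ring
    have e2 : R * (B * M + Mᵀ * B) * R = ((1 - s•R) * M) * R + (R*Mᵀ) * (1 - s•R) := by
      rw [Matrix.mul_add, Matrix.add_mul, ← Matrix.mul_assoc R B M, hRB]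
      congr 1
      rw [← Matrix.mul_assoc R Mᵀ B, Matrix.mul_assoc (R * Mᵀ) B R, hBR]
    rw [contr_symmetrize R (B * M + Mᵀ * B) hsym, contr_symmetrize R M hsym, hcX, hcX,
      hNt, htr, ht1, e2]
    simp only [Matrix.sub_mul, Matrix.mul_sub, Matrix.smul_mul, Matrix.mul_smul,
      Matrix.one_mul, Matrix.mul_one, Matrix.mul_assoc]
    ext a b
    simp only [Matrix.add_apply, Matrix.sub_apply, Matrix.smul_apply, smul_eq_mul]
    ring
  -- assembly
  have hdapp : ∀ s : ℝ, Real.sqrt ((B + s • (1:Mat3)).det) = d s := fun _ => rfl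
  ext i j
  have hL : contr (Ctens B) (B * M + Mᵀ * B) i j
      = ∫ s in Set.Ioi (0:ℝ), ∑ k, ∑ l,
          ((3/4) * (B * M + Mᵀ * B) k l)
            * (symmetrize (otimes (res B s) (res B s)) i j k l / d s) := by
    calc contr (Ctens B) (B * M + Mᵀ * B) i j
        = ∑ k, ∑ l, Ctens B i j k l * (B * M + Mᵀ * B) k l := rfl
      _ = ∑ k, ∑ l, ∫ s in Set.Ioi (0:ℝ),
            ((3/4) * (B * M + Mᵀ * B) k l)
              * (symmetrize (otimes (res B s) (res B s)) i j k l / d s) := by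
          refine Finset.sum_congr rfl fun k _ => Finset.sum_congr rfl fun l _ => ?_
          simp only [Ctens, hdapp]
          rw [show ((3:ℝ)/4) * (B * M + Mᵀ * B) k l
              = (B * M + Mᵀ * B) k l * (3/4) from by ring, mul_assoc]
          rw [integral_const_mul]
          ring
      _ = ∑ k, ∫ s in Set.Ioi (0:ℝ), ∑ l,
            ((3/4) * (B * M + Mᵀ * B) k l)
              * (symmetrize (otimes (res B s) (res B s)) i j k l / d s) := by
          refine Finset.sum_congr rfl fun k _ => ?_
          exact (integral_finset_sum Finset.univ fun l _ =>
            ((hintC i j k l).const_mul _)).symm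
      _ = _ := (integral_finset_sum Finset.univ fun k _ =>
            integrable_finset_sum _ fun l _ => ((hintC i j k l).const_mul _)).symm
  have hA_apply : ∀ a b : Fin 3, Amat B a b
      = ∫ s in Set.Ioi (0:ℝ), (1/2) * (res B s a b / d s) := by
    intro a b
    simp only [Amat, Matrix.of_apply, hdapp]
    exact (integral_const_mul _ _).symm
  have hP1 : M.trace * Amat B i j
      = ∫ s in Set.Ioi (0:ℝ), M.trace * ((1/2) * (res B s i j / d s)) := by
    rw [hA_apply i j]; exact (integral_const_mul _ _).symm
  have hP2 : (∑ k, M i k * Amat B k j)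
      = ∫ s in Set.Ioi (0:ℝ), ∑ k, M i k * ((1/2) * (res B s k j / d s)) := by
    calc (∑ k, M i k * Amat B k j)
        = ∑ k, ∫ s in Set.Ioi (0:ℝ), M i k * ((1/2) * (res B s k j / d s)) := by
          refine Finset.sum_congr rfl fun k _ => ?_
          rw [hA_apply k j]; exact (integral_const_mul _ _).symm
      _ = _ := (integral_finset_sum Finset.univ fun k _ =>
            ((hintA k j).const_mul _).const_mul _).symm
  have hP3 : (∑ k, Amat B i k * Mᵀ k j)
      = ∫ s in Set.Ioi (0:ℝ), ∑ k, Mᵀ k j * ((1/2) * (res B s i k / d s)) := by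
    calc (∑ k, Amat B i k * Mᵀ k j)
        = ∑ k, ∫ s in Set.Ioi (0:ℝ), Mᵀ k j * ((1/2) * (res B s i k / d s)) := by
          refine Finset.sum_congr rfl fun k _ => ?_
          rw [mul_comm, hA_apply i k]; exact (integral_const_mul _ _).symm
      _ = _ := (integral_finset_sum Finset.univ fun k _ =>
            ((hintA i k).const_mul _).const_mul _).symm
  have hP4 : (2:ℝ) * contr (Atens B) M i j
      = ∫ s in Set.Ioi (0:ℝ), ∑ k, ∑ l,
          ((3/2) * M k l)
            * (s * symmetrize (otimes (res B s) (res B s)) i j k l / d s) := by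
    calc (2:ℝ) * contr (Atens B) M i j
        = ∑ k, ∑ l, 2 * (Atens B i j k l * M k l) := by
          rw [show contr (Atens B) M i j = ∑ k, ∑ l, Atens B i j k l * M k l from rfl,
            Finset.mul_sum]
          exact Finset.sum_congr rfl fun k _ => Finset.mul_sum _ _ _
      _ = ∑ k, ∑ l, ∫ s in Set.Ioi (0:ℝ),
            ((3/2) * M k l)
              * (s * symmetrize (otimes (res B s) (res B s)) i j k l / d s) := by
          refine Finset.sum_congr rfl fun k _ => Finset.sum_congr rfl fun l _ => ?_
          simp only [Atens, hdapp]
          rw [show (2:ℝ) * (3 / 4 * (∫ s in Set.Ioi (0:ℝ),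
              s * symmetrize (otimes (res B s) (res B s)) i j k l / d s) * M k l)
            = ((3/2) * M k l) * ∫ s in Set.Ioi (0:ℝ),
              s * symmetrize (otimes (res B s) (res B s)) i j k l / d s from by ring]
          exact (integral_const_mul _ _).symm
      _ = ∑ k, ∫ s in Set.Ioi (0:ℝ), ∑ l,
            ((3/2) * M k l)
              * (s * symmetrize (otimes (res B s) (res B s)) i j k l / d s) := by
          refine Finset.sum_congr rfl fun k _ => ?_
          exact (integral_finset_sum Finset.univ fun l _ =>
            ((hintAt i j k l).const_mul _)).symm
      _ = _ := (integral_finset_sum Finset.univ fun k _ =>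
            integrable_finset_sum _ fun l _ => ((hintAt i j k l).const_mul _)).symm
  have hRform : (M.trace • Amat B + M * Amat B + Amat B * Mᵀ
        - (2 : ℝ) • contr (Atens B) M) i j
      = ∫ s in Set.Ioi (0:ℝ),
          (M.trace * ((1/2) * (res B s i j / d s))
            + (∑ k, M i k * ((1/2) * (res B s k j / d s)))
            + (∑ k, Mᵀ k j * ((1/2) * (res B s i k / d s)))
            - ∑ k, ∑ l, ((3/2) * M k l)
                * (s * symmetrize (otimes (res B s) (res B s)) i j k l / d s)) := by
    have hg1 : Integrable (fun s => M.trace * ((1/2) * (res B s i j / d s)))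
        (volume.restrict (Set.Ioi 0)) := ((hintA i j).const_mul _).const_mul _
    have hg2 : Integrable (fun s => ∑ k, M i k * ((1/2) * (res B s k j / d s)))
        (volume.restrict (Set.Ioi 0)) :=
      integrable_finset_sum _ fun k _ => ((hintA k j).const_mul _).const_mul _
    have hg3 : Integrable (fun s => ∑ k, Mᵀ k j * ((1/2) * (res B s i k / d s)))
        (volume.restrict (Set.Ioi 0)) :=
      integrable_finset_sum _ fun k _ => ((hintA i k).const_mul _).const_mul _
    have hg4 : Integrable (fun s => ∑ k, ∑ l, ((3/2) * M k l)
        * (s * symmetrize (otimes (res B s) (res B s)) i j k l / d s))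
        (volume.restrict (Set.Ioi 0)) :=
      integrable_finset_sum _ fun k _ =>
        integrable_finset_sum _ fun l _ => (hintAt i j k l).const_mul _
    have h0 : (M.trace • Amat B + M * Amat B + Amat B * Mᵀ
          - (2 : ℝ) • contr (Atens B) M) i j
        = M.trace * Amat B i j + (∑ k, M i k * Amat B k j)
          + (∑ k, Amat B i k * Mᵀ k j) - 2 * contr (Atens B) M i j := by
      simp [Matrix.add_apply, Matrix.sub_apply, Matrix.smul_apply, smul_eq_mul,
        Matrix.mul_apply]
    have hg12 : Integrable (fun s => M.trace * ((1/2) * (res B s i j / d s))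
        + (∑ k, M i k * ((1/2) * (res B s k j / d s))))
        (volume.restrict (Set.Ioi 0)) := hg1.add hg2
    have hg123 : Integrable (fun s => M.trace * ((1/2) * (res B s i j / d s))
        + (∑ k, M i k * ((1/2) * (res B s k j / d s)))
        + (∑ k, Mᵀ k j * ((1/2) * (res B s i k / d s))))
        (volume.restrict (Set.Ioi 0)) := hg12.add hg3
    have hsplit : (∫ s in Set.Ioi (0:ℝ),
          (M.trace * ((1/2) * (res B s i j / d s))
            + (∑ k, M i k * ((1/2) * (res B s k j / d s)))
            + (∑ k, Mᵀ k j * ((1/2) * (res B s i k / d s)))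
            - ∑ k, ∑ l, ((3/2) * M k l)
                * (s * symmetrize (otimes (res B s) (res B s)) i j k l / d s)))
        = (∫ s in Set.Ioi (0:ℝ), M.trace * ((1/2) * (res B s i j / d s)))
          + (∫ s in Set.Ioi (0:ℝ), ∑ k, M i k * ((1/2) * (res B s k j / d s)))
          + (∫ s in Set.Ioi (0:ℝ), ∑ k, Mᵀ k j * ((1/2) * (res B s i k / d s)))
          - ∫ s in Set.Ioi (0:ℝ), ∑ k, ∑ l, ((3/2) * M k l)
              * (s * symmetrize (otimes (res B s) (res B s)) i j k l / d s) := by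
      rw [integral_sub hg123 hg4, integral_add hg12 hg3, integral_add hg1 hg2]
    rw [h0, hP1, hP2, hP3, hP4, ← hsplit]
  rw [hL, hRform]
  refine setIntegral_congr_fun measurableSet_Ioi fun s hs => ?_
  have E : (∑ k, ∑ l, symmetrize (otimes (res B s) (res B s)) i j k l
        * (B * M + Mᵀ * B) k l)
      + 2*s * (∑ k, ∑ l, symmetrize (otimes (res B s) (res B s)) i j k l * M k l)
      = 2/3 * (M.trace * res B s i j + (∑ k, M i k * res B s k j)
          + (∑ k, res B s i k * Mᵀ k j)) := by
    have h2 := congrFun (congrFun (hkey s hs) i) j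
    simpa [Matrix.add_apply, Matrix.smul_apply, smul_eq_mul, Matrix.mul_apply,
      contr, Matrix.of_apply] using h2
  have pull : ∀ (c : ℝ) (g : Fin 3 → Fin 3 → ℝ) (X : Mat3),
      (∑ k, ∑ l, (c * X k l) * (g k l / d s))
        = c * (∑ k, ∑ l, g k l * X k l) * (d s)⁻¹ := by
    intro c g X
    simp only [div_eq_mul_inv, Finset.mul_sum, Finset.sum_mul]
    exact Finset.sum_congr rfl fun k _ => Finset.sum_congr rfl fun l _ => by ring
  have pull2 : ∀ (c : ℝ) (g : Fin 3 → Fin 3 → ℝ) (X : Mat3),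
      (∑ k, ∑ l, (c * X k l) * (s * g k l / d s))
        = (c * s) * (∑ k, ∑ l, g k l * X k l) * (d s)⁻¹ := by
    intro c g X
    simp only [div_eq_mul_inv, Finset.mul_sum, Finset.sum_mul]
    exact Finset.sum_congr rfl fun k _ => Finset.sum_congr rfl fun l _ => by ring
  have pull1 : ∀ (v w : Fin 3 → ℝ),
      (∑ k, v k * ((1/2) * (w k / d s)))
        = (1/2) * (∑ k, v k * w k) * (d s)⁻¹ := by
    intro v w
    simp only [div_eq_mul_inv, Finset.mul_sum, Finset.sum_mul]
    exact Finset.sum_congr rfl fun k _ => by ring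
  rw [pull, pull2, pull1, pull1,
    show (∑ k, Mᵀ k j * res B s i k) = ∑ k, res B s i k * Mᵀ k j from
      Finset.sum_congr rfl fun k _ => mul_comm _ _]
  linear_combination (3/4) * (d s)⁻¹ * E
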